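/- Let H be a group, G = H ∗ H the free product of two copies of H, and let λ, μ, ν : H ∗ H → H be respectively the first projection, the second projection, and the multiplication (fold) homomorphism. Set L = ker λ, M = ker μ, N = ker ν. Then L ∩ M = [L, M], L ∩ N = [L, N], and M ∩ N = [M, N]. -/

import Mathlib

open scoped Monoid.Coprod

section Aux

variable {G : Type*} [Group G]

/-- Images of elements of `A` and `B` commute in `G ⧸ ⁅A, B⁆`. -/
lemma aux_commute_mk' (A B : Subgroup G) [A.Normal] [B.Normal] {x y : G}
    (hx : x ∈ A) (hy : y ∈ B) :
    Commute ((QuotientGroup.mk' ⁅A, B⁆) x) ((QuotientGroup.mk' ⁅A, B⁆) y) := by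
  rw [← commutatorElement_eq_one_iff_commute, ← map_commutatorElement,
    ← MonoidHom.mem_ker, QuotientGroup.ker_mk']
  exact Subgroup.commutator_mem_commutator hx hy

/-- If the quotient map `G → G ⧸ ⁅A, B⁆` factors through `(α, β) : G → H × H`,
then `ker α ⊓ ker β ≤ ⁅A, B⁆`. -/
lemma aux_inf_le (A B : Subgroup G) [A.Normal] [B.Normal] {H : Type*} [Group H]
    (α β : G →* H) (u : H × H →* G ⧸ ⁅A, B⁆)
    (h : QuotientGroup.mk' ⁅A, B⁆ = u.comp (α.prod β)) :
    α.ker ⊓ β.ker ≤ ⁅A, B⁆ := by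
  intro g hg
  obtain ⟨ha, hb⟩ := hg
  have ha' : α g = 1 := ha
  have hb' : β g = 1 := hb
  have : (QuotientGroup.mk' ⁅A, B⁆) g = 1 := by
    rw [h]
    simp [MonoidHom.prod_apply, ha', hb', ← Prod.one_eq_mk]
  rwa [← QuotientGroup.ker_mk' ⁅A, B⁆]

end Aux

/-- let `H` be a group, `G = H ∗ H` the free product of two copies of `H`,
and let `λ, μ, ν : H ∗ H → H` be the first projection, the second projection and the
multiplication (fold) homomorphism.  With `L = ker λ`, `M = ker μ`, `N = ker ν` we have
`L ∩ M = [L, M]`, `L ∩ N = [L, N]` and `M ∩ N = [M, N]`. -/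
theorem freeProduct_kernel_inf_eq_commutator (H : Type*) [Group H]
    (lam mu nu : (H ∗ H) →* H)
    (hlam : lam = Monoid.Coprod.lift (MonoidHom.id H) 1)
    (hmu : mu = Monoid.Coprod.lift 1 (MonoidHom.id H))
    (hnu : nu = Monoid.Coprod.lift (MonoidHom.id H) (MonoidHom.id H))
    (L M N : Subgroup (H ∗ H))
    (hL : L = lam.ker) (hM : M = mu.ker) (hN : N = nu.ker) :
    L ⊓ M = ⁅L, M⁆ ∧ L ⊓ N = ⁅L, N⁆ ∧ M ⊓ N = ⁅M, N⁆ := by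
  subst hL hM hN
  -- memberships
  have hinrL : ∀ b : H, Monoid.Coprod.inr b ∈ lam.ker := by
    intro b; simp [MonoidHom.mem_ker, hlam]
  have hinlM : ∀ a : H, Monoid.Coprod.inl a ∈ mu.ker := by
    intro a; simp [MonoidHom.mem_ker, hmu]
  have hN1 : ∀ a : H, Monoid.Coprod.inl a * (Monoid.Coprod.inr a)⁻¹ ∈ nu.ker := by
    intro a; simp [MonoidHom.mem_ker, hnu]
  have hN2 : ∀ b : H, Monoid.Coprod.inr b * (Monoid.Coprod.inl b)⁻¹ ∈ nu.ker := by
    intro b; simp [MonoidHom.mem_ker, hnu]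
  refine ⟨?_, ?_, ?_⟩
  · -- L ⊓ M = ⁅L, M⁆
    refine le_antisymm ?_ (Subgroup.commutator_le_inf _ _)
    set π := QuotientGroup.mk' ⁅lam.ker, mu.ker⁆ with hπ
    refine aux_inf_le _ _ lam mu
      ((π.comp Monoid.Coprod.inl).noncommCoprod (π.comp Monoid.Coprod.inr)
        (fun a b => (aux_commute_mk' lam.ker mu.ker (hinrL b) (hinlM a)).symm)) ?_
    refine Monoid.Coprod.hom_ext ?_ ?_ <;> ext x <;>
      simp [hlam, hmu, hπ, MonoidHom.noncommCoprod_apply]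
  · -- L ⊓ N = ⁅L, N⁆
    refine le_antisymm ?_ (Subgroup.commutator_le_inf _ _)
    set π := QuotientGroup.mk' ⁅lam.ker, nu.ker⁆ with hπ
    -- the homomorphism a ↦ π (inl a * (inr a)⁻¹)
    have fmul : ∀ a b : H,
        π (Monoid.Coprod.inl (a * b) * (Monoid.Coprod.inr (a * b))⁻¹)
          = π (Monoid.Coprod.inl a * (Monoid.Coprod.inr a)⁻¹)
            * π (Monoid.Coprod.inl b * (Monoid.Coprod.inr b)⁻¹) := by
      intro a b
      have hc : Commute (π ((Monoid.Coprod.inr a)⁻¹))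
          (π (Monoid.Coprod.inl b * (Monoid.Coprod.inr b)⁻¹)) :=
        aux_commute_mk' lam.ker nu.ker (lam.ker.inv_mem (hinrL a)) (hN1 b)
      have := hc.eq
      simp only [map_mul, map_inv, mul_inv_rev] at this ⊢
      calc π (Monoid.Coprod.inl a) * π (Monoid.Coprod.inl b)
            * ((π (Monoid.Coprod.inr b))⁻¹ * (π (Monoid.Coprod.inr a))⁻¹)
          = π (Monoid.Coprod.inl a)
            * ((π (Monoid.Coprod.inl b) * (π (Monoid.Coprod.inr b))⁻¹)
              * (π (Monoid.Coprod.inr a))⁻¹) := by group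
        _ = π (Monoid.Coprod.inl a)
            * ((π (Monoid.Coprod.inr a))⁻¹
              * (π (Monoid.Coprod.inl b) * (π (Monoid.Coprod.inr b))⁻¹)) := by
              rw [← this]
        _ = π (Monoid.Coprod.inl a) * (π (Monoid.Coprod.inr a))⁻¹
            * (π (Monoid.Coprod.inl b) * (π (Monoid.Coprod.inr b))⁻¹) := by group
    set f : H →* (H ∗ H) ⧸ ⁅lam.ker, nu.ker⁆ :=
      MonoidHom.mk' (fun a => π (Monoid.Coprod.inl a * (Monoid.Coprod.inr a)⁻¹)) fmul
      with hf
    refine aux_inf_le _ _ lam nu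
      (f.noncommCoprod (π.comp Monoid.Coprod.inr)
        (fun a b => (aux_commute_mk' lam.ker nu.ker (hinrL b) (hN1 a)).symm)) ?_
    refine Monoid.Coprod.hom_ext ?_ ?_ <;> ext x <;>
      simp [hlam, hnu, hf, hπ, MonoidHom.noncommCoprod_apply, mul_assoc]
  · -- M ⊓ N = ⁅M, N⁆
    refine le_antisymm ?_ (Subgroup.commutator_le_inf _ _)
    set π := QuotientGroup.mk' ⁅mu.ker, nu.ker⁆ with hπ
    have gmul : ∀ a b : H,
        π (Monoid.Coprod.inr (a * b) * (Monoid.Coprod.inl (a * b))⁻¹)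
          = π (Monoid.Coprod.inr a * (Monoid.Coprod.inl a)⁻¹)
            * π (Monoid.Coprod.inr b * (Monoid.Coprod.inl b)⁻¹) := by
      intro a b
      have hc : Commute (π ((Monoid.Coprod.inl a)⁻¹))
          (π (Monoid.Coprod.inr b * (Monoid.Coprod.inl b)⁻¹)) :=
        aux_commute_mk' mu.ker nu.ker (mu.ker.inv_mem (hinlM a)) (hN2 b)
      have := hc.eq
      simp only [map_mul, map_inv, mul_inv_rev] at this ⊢
      calc π (Monoid.Coprod.inr a) * π (Monoid.Coprod.inr b)
            * ((π (Monoid.Coprod.inl b))⁻¹ * (π (Monoid.Coprod.inl a))⁻¹)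
          = π (Monoid.Coprod.inr a)
            * ((π (Monoid.Coprod.inr b) * (π (Monoid.Coprod.inl b))⁻¹)
              * (π (Monoid.Coprod.inl a))⁻¹) := by group
        _ = π (Monoid.Coprod.inr a)
            * ((π (Monoid.Coprod.inl a))⁻¹
              * (π (Monoid.Coprod.inr b) * (π (Monoid.Coprod.inl b))⁻¹)) := by
              rw [← this]
        _ = π (Monoid.Coprod.inr a) * (π (Monoid.Coprod.inl a))⁻¹
            * (π (Monoid.Coprod.inr b) * (π (Monoid.Coprod.inl b))⁻¹) := by group
    set g : H →* (H ∗ H) ⧸ ⁅mu.ker, nu.ker⁆ :=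
      MonoidHom.mk' (fun a => π (Monoid.Coprod.inr a * (Monoid.Coprod.inl a)⁻¹)) gmul
      with hg
    refine aux_inf_le _ _ mu nu
      (g.noncommCoprod (π.comp Monoid.Coprod.inl)
        (fun a b => (aux_commute_mk' mu.ker nu.ker (hinlM b) (hN2 a)).symm)) ?_
    refine Monoid.Coprod.hom_ext ?_ ?_ <;> ext x <;>
      simp [hmu, hnu, hg, hπ, MonoidHom.noncommCoprod_apply, mul_assoc]
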